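/- For the Bott projection P(z) = (1/(1+|z|²))·[[1, z̄],[z, |z|²]] on ℝ² ≅ ℂ (z = x + iy), the pairing integral satisfies |∫_{ℝ²} Tr( P·(∂ₓP·∂ᵧP − ∂ᵧP·∂ₓP) ) dx dy| = 2π. -/

import Mathlib

attribute [local instance] Matrix.frobeniusNormedAddCommGroup Matrix.frobeniusNormedSpace

/-- The Bott projection `P(z) = (1/(1+|z|²)) [[1, z̄],[z, |z|²]]`. -/
noncomputable def BottP16 (z : ℂ) : Matrix (Fin 2) (Fin 2) ℂ :=
  ((1 + Complex.normSq z : ℂ)⁻¹) •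
    !![1, (starRingEnd ℂ) z; z, (Complex.normSq z : ℂ)]

/-- The derivative of `P` in the direction of the real coordinate `x`. -/
noncomputable def BottPx (z : ℂ) : Matrix (Fin 2) (Fin 2) ℂ :=
  fderiv ℝ BottP16 z 1

/-- The derivative of `P` in the direction of the real coordinate `y`. -/
noncomputable def BottPy (z : ℂ) : Matrix (Fin 2) (Fin 2) ℂ :=
  fderiv ℝ BottP16 z Complex.I

open Complex MeasureTheory




noncomputable def Dab (α β : ℂ) : ℂ →L[ℝ] ℂ :=
  α • ContinuousLinearMap.id ℝ ℂ + β • (Complex.conjCLE : ℂ ≃L[ℝ] ℂ).toContinuousLinearMap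

@[simp] lemma Dab_apply (α β v : ℂ) : Dab α β v = α * v + β * (starRingEnd ℂ) v := by
  simp [Dab, smul_eq_mul]

lemma hu0 (z : ℂ) : (1 : ℂ) + (Complex.normSq z : ℂ) ≠ 0 := by
  intro h
  have h2 := congrArg Complex.re h
  simp [Complex.add_re] at h2
  nlinarith [Complex.normSq_nonneg z]



def E11 : Matrix (Fin 2) (Fin 2) ℂ := !![1,0;0,0]
def E12 : Matrix (Fin 2) (Fin 2) ℂ := !![0,1;0,0]
def E21 : Matrix (Fin 2) (Fin 2) ℂ := !![0,0;1,0]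
def E22 : Matrix (Fin 2) (Fin 2) ℂ := !![0,0;0,1]

lemma hasFDeriv_normSqC (z : ℂ) :
    HasFDerivAt (fun w : ℂ => ((Complex.normSq w : ℝ) : ℂ)) (Dab ((starRingEnd ℂ) z) z) z := by
  have feq : (fun w : ℂ => ((Complex.normSq w : ℝ) : ℂ)) =
      fun w : ℂ => w * (starRingEnd ℂ) w := funext fun w => (Complex.mul_conj w).symm
  rw [feq]
  have h := (hasFDerivAt_id z).mul
    ((Complex.conjCLE : ℂ ≃L[ℝ] ℂ).hasFDerivAt (x := z))
  refine h.congr_fderiv ?_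
  ext v
  simp [Dab, smul_eq_mul]
  ring

lemma hasFDeriv_inv1n (z : ℂ) :
    HasFDerivAt (fun w : ℂ => ((1 : ℂ) + (Complex.normSq w : ℝ))⁻¹)
      (Dab (-(starRingEnd ℂ) z * (((1:ℂ) + Complex.normSq z)^2)⁻¹)
           (-z * (((1:ℂ) + Complex.normSq z)^2)⁻¹)) z := by
  have h1 : HasFDerivAt (fun w : ℂ => (1 : ℂ) + (Complex.normSq w : ℝ))
      (Dab ((starRingEnd ℂ) z) z) z := by
    exact (hasFDeriv_normSqC z).const_add (1:ℂ)
  have h2 := (hasFDerivAt_inv' (𝕜 := ℝ) (hu0 z)).comp z h1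
  refine h2.congr_fderiv ?_
  ext v
  have hu := hu0 z
  simp [Dab, smul_eq_mul, ContinuousLinearMap.mulLeftRight_apply]
  field_simp

noncomputable def Gg (z : ℂ) : ℂ := (((1:ℂ) + Complex.normSq z)^2)⁻¹

set_option maxHeartbeats 2000000 in
lemma hasFDeriv_BottP16 (z : ℂ) :
    HasFDerivAt BottP16
      (((Dab (-(starRingEnd ℂ) z * Gg z) (-z * Gg z)).smulRight E11 +
        (Dab (-((starRingEnd ℂ) z)^2 * Gg z) (Gg z)).smulRight E12) +
       ((Dab (Gg z) (-z^2 * Gg z)).smulRight E21 +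
        (Dab ((starRingEnd ℂ) z * Gg z) (z * Gg z)).smulRight E22)) z := by
  have ha := hasFDeriv_inv1n z
  have hconj := (Complex.conjCLE : ℂ ≃L[ℝ] ℂ).hasFDerivAt (x := z)
  have hn := hasFDeriv_normSqC z
  have hid := hasFDerivAt_id (𝕜 := ℝ) z
  have hfun : BottP16 = fun w : ℂ =>
      (((1 : ℂ) + (Complex.normSq w : ℝ))⁻¹ • E11 +
       (((1 : ℂ) + (Complex.normSq w : ℝ))⁻¹ * (starRingEnd ℂ) w) • E12) +
      ((((1 : ℂ) + (Complex.normSq w : ℝ))⁻¹ * w) • E21 +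
       (((1 : ℂ) + (Complex.normSq w : ℝ))⁻¹ * ((Complex.normSq w : ℝ) : ℂ)) • E22) := by
    funext w
    ext i j
    fin_cases i <;> fin_cases j <;>
      simp [BottP16, E11, E12, E21, E22, Matrix.add_apply, Matrix.smul_apply, smul_eq_mul]
  rw [hfun]
  have h := (((ha.smul_const E11).add ((ha.mul hconj).smul_const E12)).add
    (((ha.mul hid).smul_const E21).add ((ha.mul hn).smul_const E22)))
  refine h.congr_fderiv ?_
  have hu := hu0 z
  have hu' : (1:ℂ) + z * (starRingEnd ℂ) z ≠ 0 := by rw [Complex.mul_conj]; exact hu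
  refine ContinuousLinearMap.ext fun v => ?_
  refine Eq.trans (b := Dab (-(starRingEnd ℂ) z * Gg z) (-z * Gg z) v • E11 +
      Dab (-((starRingEnd ℂ) z)^2 * Gg z) (Gg z) v • E12 +
      (Dab (Gg z) (-z^2 * Gg z) v • E21 + Dab ((starRingEnd ℂ) z * Gg z) (z * Gg z) v • E22)) ?_ rfl
  refine Matrix.ext fun i j => ?_
  fin_cases i <;> fin_cases j <;>
    · simp only [ContinuousLinearMap.add_apply, ContinuousLinearMap.smulRight_apply,
        ContinuousLinearMap.smul_apply, ContinuousLinearMap.coe_smul', Pi.smul_apply,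
        ContinuousLinearEquiv.coe_coe, Complex.conjCLE_apply, Dab_apply, Gg,
        E11, E12, E21, E22, Matrix.add_apply, Matrix.smul_apply, smul_eq_mul,
        Matrix.cons_val', Matrix.cons_val_zero, Matrix.cons_val_one, Matrix.head_cons,
        Matrix.empty_val', Matrix.cons_val_fin_one, Matrix.head_fin_const,
        Matrix.of_apply, Fin.zero_eta, Fin.mk_one, Fin.isValue, id_eq, ContinuousLinearMap.id_apply]
      simp only [← Complex.mul_conj]
      field_simp [hu']
      try ring

set_option maxHeartbeats 1000000 in
lemma BottPx_eq (z : ℂ) : BottPx z =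
    Gg z • !![-(z + (starRingEnd ℂ) z), 1 - ((starRingEnd ℂ) z)^2;
              1 - z^2, z + (starRingEnd ℂ) z] := by
  rw [BottPx, (hasFDeriv_BottP16 z).fderiv]
  ext i j
  fin_cases i <;> fin_cases j <;>
    · simp only [ContinuousLinearMap.add_apply, ContinuousLinearMap.smulRight_apply, Dab_apply,
        E11, E12, E21, E22, Matrix.add_apply, Matrix.smul_apply, smul_eq_mul,
        Matrix.cons_val', Matrix.cons_val_zero, Matrix.cons_val_one, Matrix.head_cons,
        Matrix.empty_val', Matrix.cons_val_fin_one, Matrix.head_fin_const, Matrix.of_apply,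
        Fin.mk_zero, Fin.mk_one, Fin.isValue, map_one, mul_one]
      ring

set_option maxHeartbeats 1000000 in
lemma BottPy_eq (z : ℂ) : BottPy z =
    (Complex.I * Gg z) • !![z - (starRingEnd ℂ) z, -(1 + ((starRingEnd ℂ) z)^2);
              1 + z^2, (starRingEnd ℂ) z - z] := by
  rw [BottPy, (hasFDeriv_BottP16 z).fderiv]
  ext i j
  fin_cases i <;> fin_cases j <;>
    · simp only [ContinuousLinearMap.add_apply, ContinuousLinearMap.smulRight_apply, Dab_apply,
        E11, E12, E21, E22, Matrix.add_apply, Matrix.smul_apply, smul_eq_mul,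
        Matrix.cons_val', Matrix.cons_val_zero, Matrix.cons_val_one, Matrix.head_cons,
        Matrix.empty_val', Matrix.cons_val_fin_one, Matrix.head_fin_const, Matrix.of_apply,
        Complex.conj_I, Fin.mk_zero, Fin.mk_one, Fin.isValue, map_one, mul_one]
      ring

set_option maxHeartbeats 1000000 in
lemma trace_eq (z : ℂ) :
    (BottP16 z * (BottPx z * BottPy z - BottPy z * BottPx z)).trace =
      2 * Complex.I * (((1:ℂ) + Complex.normSq z)^2)⁻¹ := by
  have hu := hu0 z
  have hu' : (1:ℂ) + z * (starRingEnd ℂ) z ≠ 0 := by rw [Complex.mul_conj]; exact hu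
  rw [BottPx_eq, BottPy_eq, BottP16]
  simp only [Gg, Matrix.smul_mul, Matrix.mul_smul, Matrix.smul_apply, smul_sub,
    Matrix.trace_smul, smul_eq_mul, mul_sub, Matrix.trace_sub]
  simp only [Matrix.mul_fin_two, Matrix.trace_fin_two, Matrix.sub_apply,
    Matrix.cons_val', Matrix.cons_val_zero, Matrix.cons_val_one, Matrix.head_cons,
    Matrix.empty_val', Matrix.cons_val_fin_one, Matrix.head_fin_const, Matrix.of_apply,
    Matrix.smul_apply, smul_eq_mul]
  simp only [← Complex.mul_conj]
  field_simp [hu']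
  ring

lemma radial_int : ∫ y in Set.Ioi (0:ℝ), y * (((1:ℝ)+y^2)^2)⁻¹ = 1/2 := by
  have hderiv : ∀ y ∈ Set.Ici (0:ℝ),
      HasDerivAt (fun t : ℝ => -((1:ℝ)+t^2)⁻¹/2) (y * (((1:ℝ)+y^2)^2)⁻¹) y := by
    intro y _
    have h1 : HasDerivAt (fun t : ℝ => (1:ℝ) + t^2) (2*y) y := by
      simpa using (hasDerivAt_pow 2 y).const_add 1
    have h2 := ((h1.inv (by positivity)).neg).div_const 2
    refine HasDerivAt.congr_deriv (f := fun t : ℝ => -((1:ℝ)+t^2)⁻¹/2) h2 ?_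
    have : ((1:ℝ)+y^2) ≠ 0 := by positivity
    field_simp
  have hpos : ∀ y ∈ Set.Ioi (0:ℝ), 0 ≤ y * (((1:ℝ)+y^2)^2)⁻¹ := by
    intro y hy; have := le_of_lt (Set.mem_Ioi.mp hy); positivity
  have htend : Filter.Tendsto (fun t : ℝ => -((1:ℝ)+t^2)⁻¹/2) Filter.atTop (nhds 0) := by
    have h1 : Filter.Tendsto (fun t : ℝ => (1:ℝ)+t^2) Filter.atTop Filter.atTop :=
      Filter.tendsto_atTop_add_const_left _ 1 (Filter.tendsto_pow_atTop (by norm_num))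
    have h2 := (tendsto_inv_atTop_zero.comp h1).neg.div_const 2
    simpa using h2
  have := MeasureTheory.integral_Ioi_of_hasDerivAt_of_nonneg' hderiv hpos htend
  rw [this]
  norm_num

lemma real_int : ∫ z : ℂ, (((1:ℝ) + Complex.normSq z)^2)⁻¹ = Real.pi := by
  have hfun : (fun z : ℂ => (((1:ℝ) + Complex.normSq z)^2)⁻¹) =
      fun z : ℂ => (fun r : ℝ => (((1:ℝ)+r^2)^2)⁻¹) ‖z‖ := by
    funext z
    simp [Complex.normSq_eq_norm_sq]
  rw [hfun, MeasureTheory.integral_fun_norm_addHaar volume (fun r : ℝ => (((1:ℝ)+r^2)^2)⁻¹)]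
  rw [Complex.finrank_real_complex]
  have hball : volume.real (Metric.ball (0:ℂ) 1) = Real.pi := by
    simp [Measure.real, Complex.volume_ball]
  rw [hball]
  have : ∫ y in Set.Ioi (0:ℝ), y ^ (2-1) • (((1:ℝ)+y^2)^2)⁻¹ =
      ∫ y in Set.Ioi (0:ℝ), y * (((1:ℝ)+y^2)^2)⁻¹ := by
    norm_num [smul_eq_mul]
  rw [this, radial_int]
  rw [smul_eq_mul]
  ring


/-- The index pairing of the fundamental degree-2 cyclic cocycle with the Bott
projection: `|∫_{ℝ²} Tr(P (∂ₓP ∂ᵧP - ∂ᵧP ∂ₓP))| = 2π`. -/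
theorem stmt16 :
    ‖(∫ z : ℂ, (BottP16 z * (BottPx z * BottPy z - BottPy z * BottPx z)).trace)‖ =
      2 * Real.pi := by
  have h1 : (∫ z : ℂ, (BottP16 z * (BottPx z * BottPy z - BottPy z * BottPx z)).trace) =
      ∫ z : ℂ, 2 * Complex.I * ((((1:ℂ) + Complex.normSq z)^2)⁻¹) := by
    simp only [trace_eq]
  rw [h1, MeasureTheory.integral_const_mul]
  have h2 : (fun z : ℂ => ((((1:ℂ) + Complex.normSq z)^2)⁻¹)) =
      fun z : ℂ => (((((1:ℝ) + Complex.normSq z)^2)⁻¹ : ℝ) : ℂ) := by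
    funext z; push_cast; ring
  rw [h2]
  have h3 : (∫ z : ℂ, ((((((1:ℝ) + Complex.normSq z)^2)⁻¹ : ℝ)) : ℂ)) = ((Real.pi : ℝ) : ℂ) := by
    rw [← real_int]; exact integral_ofReal
  rw [h3]
  simp [Complex.normSq_mul, Complex.normSq_I]
  exact Real.pi_pos.le
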